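/- Let βv, μv > 0 and C ≥ 0 be real numbers and set R0 := (βv/μv)·C. Let Sv* > 0, Iv* ≥ 0, B* ≥ 0 be real numbers and put Nv* := Sv* + Iv*. Assume the equilibrium relation βv·Sv*·B* = μv·Iv* and the bound B* ≤ (Iv*/Nv*)·C. If R0 < 1, then Iv* = 0 and B* = 0. -/
import Mathlib


/-- at a steady state with `βv·Sv*·B* = μv·Iv*` and the bound
`B* ≤ (Iv*/Nv*)·C`, if `R0 := (βv/μv)·C < 1` then `Iv* = 0` and `B* = 0`. -/
theorem disease_free_when_R0_lt_one (βv μv C : ℝ)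
    (hβv : 0 < βv) (hμv : 0 < μv) (hC : 0 ≤ C)
    (Svstar Ivstar Bstar : ℝ)
    (hSv : 0 < Svstar) (hIv : 0 ≤ Ivstar) (hB : 0 ≤ Bstar)
    (heq : βv * Svstar * Bstar = μv * Ivstar)
    (hbound : Bstar ≤ Ivstar / (Svstar + Ivstar) * C)
    (hR0 : (βv / μv) * C < 1) :
    Ivstar = 0 ∧ Bstar = 0 := by
  have hN : 0 < Svstar + Ivstar := by linarith
  have hIv0 : Ivstar = 0 := by
    by_contra h
    have hIvpos : 0 < Ivstar := lt_of_le_of_ne hIv (Ne.symm h)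
    -- μv * Iv = βv * Sv * B ≤ βv * Sv * (Iv/N * C) ≤ βv * Iv * C < μv * Iv
    have h1 : μv * Ivstar ≤ βv * Svstar * (Ivstar / (Svstar + Ivstar) * C) := by
      rw [← heq]
      exact mul_le_mul_of_nonneg_left hbound (by positivity)
    have hfrac : Svstar * (Ivstar / (Svstar + Ivstar)) ≤ Ivstar := by
      rw [mul_div_assoc', div_le_iff₀ hN]
      nlinarith
    have h2 : βv * Svstar * (Ivstar / (Svstar + Ivstar) * C) ≤ βv * Ivstar * C := by
      calc βv * Svstar * (Ivstar / (Svstar + Ivstar) * C)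
          = βv * C * (Svstar * (Ivstar / (Svstar + Ivstar))) := by ring
        _ ≤ βv * C * Ivstar := mul_le_mul_of_nonneg_left hfrac (by positivity)
        _ = βv * Ivstar * C := by ring
    have h3 : βv * Ivstar * C < μv * Ivstar := by
      rw [div_mul_eq_mul_div] at hR0
      have hlt : βv * C < μv := (div_lt_one hμv).mp hR0
      nlinarith
    linarith
  refine ⟨hIv0, ?_⟩
  have : βv * Svstar * Bstar = 0 := by rw [heq, hIv0, mul_zero]
  have hprod : βv * Svstar ≠ 0 := by positivity
  exact (mul_eq_zero.mp this).resolve_left hprod
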